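/- Let 0<ε_0<1/10, R_0>0, 0<δ_0<π/2, and let A∈ℂ satisfy Re(√−1·A)>0 and Re(√−1·A·e^{√−1(1−ε_0)π})>0. Define g(w)=w+A·w^{1−ε_0} on X(R_0,δ_0). Then there exists B_0>0 such that g restricts to a holomorphic bijection from {w∈X(R_0,δ_0): Im g(w)≥B_0} onto {ζ∈ℂ: Im ζ≥B_0}. -/

import Mathlib

/-- The branch of `log` on the sector around the positive imaginary axis:
`log w = log(-i w) + iπ/2`. -/
noncomputable def logS (w : ℂ) : ℂ :=
  Complex.log (-Complex.I * w) + (Real.pi / 2 : ℝ) * Complex.I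

/-- The branch of the power `w ^ κ = exp (κ log w)` on the sector around the
positive imaginary axis. -/
noncomputable def powS (w : ℂ) (κ : ℝ) : ℂ := Complex.exp ((κ : ℂ) * logS w)

/-- The sector `X(R,δ) = {w : |w| > R, arg w ∈ (-δ, π + δ)}` around the positive
imaginary axis. -/
def sectorX (R δ : ℝ) : Set ℂ :=
  {w : ℂ | R < ‖w‖ ∧ |Complex.arg (-Complex.I * w)| < Real.pi / 2 + δ}

open Complex Set
open scoped NNReal ENNReal

lemma logS_re (w : ℂ) : (logS w).re = Real.log (‖w‖) := by
  simp [logS, Complex.log_re, map_mul]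

lemma logS_im (w : ℂ) : (logS w).im = (-Complex.I * w).arg + Real.pi / 2 := by
  simp [logS, Complex.log_im]

lemma powS_eq (w : ℂ) (hw : w ≠ 0) (κ : ℝ) :
    powS w κ = ((‖w‖ ^ κ : ℝ) : ℂ) *
      Complex.exp (((κ * ((-Complex.I * w).arg + Real.pi / 2) : ℝ)) * Complex.I) := by
  rw [powS]
  have h1 : (κ : ℂ) * logS w
      = ((κ * (logS w).re : ℝ) : ℂ) + ((κ * (logS w).im : ℝ) : ℂ) * Complex.I := by
    push_cast
    rw [mul_comm (κ:ℂ) (logS w)]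
    nth_rewrite 1 [← Complex.re_add_im (logS w)]
    ring
  rw [h1, Complex.exp_add, logS_re, logS_im]
  congr 1
  rw [← Complex.ofReal_exp]
  norm_cast
  rw [Real.rpow_def_of_pos (norm_pos_iff.mpr hw)]
  ring_nf

lemma abs_powS (w : ℂ) (hw : w ≠ 0) (κ : ℝ) :
    ‖powS w κ‖ = ‖w‖ ^ κ := by
  rw [powS_eq w hw κ]
  rw [norm_mul, Complex.norm_exp_ofReal_mul_I, mul_one, Complex.norm_real, Real.norm_eq_abs,
    _root_.abs_of_nonneg (Real.rpow_nonneg (norm_nonneg w) κ)]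

lemma im_mul_powS (A w : ℂ) (hw : w ≠ 0) (κ : ℝ) :
    (A * powS w κ).im = ‖w‖ ^ κ *
      (A * Complex.exp (((κ * ((-Complex.I * w).arg + Real.pi / 2) : ℝ)) * Complex.I)).im := by
  rw [powS_eq w hw κ, ← mul_assoc, mul_comm A, mul_assoc]
  simp [Complex.mul_im]

lemma hasDerivAt_powS (κ : ℝ) {w : ℂ} (hw : -Complex.I * w ∈ Complex.slitPlane) :
    HasDerivAt (fun z => powS z κ) ((κ : ℂ) / w * powS w κ) w := by
  have hw0 : w ≠ 0 := by
    rintro rfl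
    simp [Complex.mem_slitPlane_iff] at hw
  have h1 : HasDerivAt (fun z : ℂ => -Complex.I * z) (-Complex.I) w := by
    simpa using (hasDerivAt_id w).const_mul (-Complex.I)
  have h2 : HasDerivAt Complex.log (-Complex.I * w)⁻¹ (-Complex.I * w) :=
    Complex.hasDerivAt_log hw
  have h3 : HasDerivAt (fun z : ℂ => Complex.log (-Complex.I * z))
      ((-Complex.I * w)⁻¹ * -Complex.I) w := h2.comp w h1
  have h4 : HasDerivAt logS w⁻¹ w := by
    have h5 := h3.add_const (((Real.pi / 2 : ℝ) : ℂ) * Complex.I)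
    have : (-Complex.I * w)⁻¹ * -Complex.I = w⁻¹ := by
      field_simp
    rw [this] at h5
    exact h5
  have h5 : HasDerivAt (fun z => (κ : ℂ) * logS z) ((κ : ℂ) * w⁻¹) w := h4.const_mul _
  have h6 := (Complex.hasDerivAt_exp ((κ : ℂ) * logS w)).comp w h5
  refine h6.congr_deriv ?_
  rw [powS]
  field_simp

lemma im_ofReal_mul_exp (r θ : ℝ) :
    ((r : ℂ) * Complex.exp ((θ : ℂ) * Complex.I)).im = r * Real.sin θ := by
  simp [Complex.exp_mul_I, Complex.mul_im, Complex.sin_ofReal_re]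

lemma eq_abs_mul_exp (w : ℂ) :
    w = (‖w‖ : ℂ) * Complex.exp ((((-Complex.I * w).arg + Real.pi / 2 : ℝ) : ℂ) * Complex.I) := by
  have h := Complex.norm_mul_exp_arg_mul_I (-Complex.I * w)
  have h2 : w = Complex.I * (-Complex.I * w) := by ring_nf; simp [Complex.I_sq]
  have habs : ‖-Complex.I * w‖ = ‖w‖ := by simp
  have hI : Complex.I = Complex.exp (((Real.pi / 2 : ℝ) : ℂ) * Complex.I) := by
    rw [Complex.exp_mul_I]
    norm_num [Real.cos_pi_div_two, Real.sin_pi_div_two]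
  calc w = Complex.I * (-Complex.I * w) := h2
    _ = Complex.I * ((‖-Complex.I * w‖ : ℂ) * Complex.exp ((-Complex.I * w).arg * Complex.I)) := by rw [h]
    _ = (‖w‖ : ℂ) * (Complex.exp ((-Complex.I * w).arg * Complex.I) * Complex.exp (((Real.pi / 2 : ℝ) : ℂ) * Complex.I)) := by
        rw [habs]; rw [← hI]; ring
    _ = _ := by rw [← Complex.exp_add]; congr 2; push_cast; ring

lemma sin_ge_of_mem {η α : ℝ} (hη : 0 < η) (hη2 : η ≤ Real.pi / 2) (h1 : η ≤ α)
    (h2 : α ≤ Real.pi - η) : Real.sin η ≤ Real.sin α := by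
  rcases le_or_gt α (Real.pi / 2) with h | h
  · exact Real.strictMonoOn_sin.monotoneOn ⟨by linarith, hη2⟩ ⟨by linarith, h⟩ h1
  · rw [← Real.sin_pi_sub α]
    exact Real.strictMonoOn_sin.monotoneOn ⟨by linarith, hη2⟩
      ⟨by linarith [Real.pi_pos], by linarith⟩ (by linarith)

lemma exists_fixedPoint_closedBall {c : ℂ} {ρ : ℝ} (hρ : 0 ≤ ρ) (f : ℂ → ℂ)
    (hmaps : Set.MapsTo f (Metric.closedBall c ρ) (Metric.closedBall c ρ))
    (hlip : ∀ x ∈ Metric.closedBall c ρ, ∀ y ∈ Metric.closedBall c ρ,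
      dist (f x) (f y) ≤ (1 / 2 : ℝ) * dist x y) :
    ∃ x ∈ Metric.closedBall c ρ, f x = x := by
  have hK : ((1/2 : ℝ≥0) : ℝ≥0∞) < 1 := by norm_num
  have hcw : ContractingWith (1/2 : ℝ≥0) (hmaps.restrict f _ _) := by
    constructor
    · exact_mod_cast hK
    · apply LipschitzWith.of_dist_le_mul
      rintro ⟨x, hx⟩ ⟨y, hy⟩
      have := hlip x hx y hy
      simpa [Subtype.dist_eq] using this
  obtain ⟨y, hy, hfy, -⟩ := hcw.exists_fixedPoint'
    (Metric.isClosed_closedBall.isComplete) hmaps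
    (Metric.mem_closedBall_self hρ) (edist_ne_top _ _)
  exact ⟨y, hy, hfy⟩

set_option maxHeartbeats 2000000 in
/-- `g(w) = w + A w^{1-ε₀}` is a holomorphic bijection from the part
of the sector where `Im g(w) ≥ B₀` onto the half plane `{Im ζ ≥ B₀}`. -/
theorem coordinate_bijection
    (ε₀ : ℝ) (hε₀0 : 0 < ε₀) (hε₀1 : ε₀ < 1 / 10)
    (R₀ : ℝ) (hR₀ : 0 < R₀) (δ₀ : ℝ) (hδ₀0 : 0 < δ₀) (hδ₀1 : δ₀ < Real.pi / 2)
    (A : ℂ) (hA1 : 0 < (Complex.I * A).re)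
    (hA2 : 0 < (Complex.I * A * Complex.exp ((((1 - ε₀) * Real.pi : ℝ)) * Complex.I)).re)
    (g : ℂ → ℂ) (hg : ∀ w : ℂ, g w = w + A * powS w (1 - ε₀)) :
    ∃ B₀ : ℝ, 0 < B₀ ∧
      DifferentiableOn ℂ g (sectorX R₀ δ₀) ∧
      Set.BijOn g {w : ℂ | w ∈ sectorX R₀ δ₀ ∧ B₀ ≤ (g w).im}
        {ζ : ℂ | B₀ ≤ ζ.im} := by
  have hπ := Real.pi_pos
  have hπ3 := Real.pi_gt_three
  obtain ⟨κ, hκ⟩ : ∃ κ : ℝ, κ = 1 - ε₀ := ⟨_, rfl⟩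
  simp only [← hκ] at hA2 hg
  have hκ0 : 0 < κ := by rw [hκ]; linarith
  have hκ1 : κ < 1 := by rw [hκ]; linarith
  obtain ⟨a, ha⟩ : ∃ a : ℝ, a = ‖A‖ := ⟨_, rfl⟩
  have hA0 : A ≠ 0 := by
    rintro rfl
    simp at hA1
  have ha0 : 0 < a := by rw [ha]; exact norm_pos_iff.mpr hA0
  obtain ⟨ψ, hψdef⟩ : ∃ ψ : ℝ → ℝ,
      ψ = fun t => (A * Complex.exp (((κ * t : ℝ) : ℂ) * Complex.I)).im := ⟨_, rfl⟩
  have himneg : ∀ z : ℂ, 0 < (Complex.I * z).re → z.im < 0 := by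
    intro z hz
    simp [Complex.mul_re] at hz
    linarith
  have hAim : A.im < 0 := himneg A hA1
  have hψ0 : ψ 0 = A.im := by simp [hψdef]
  have hψπ : ψ Real.pi < 0 := by
    have h := hA2
    rw [mul_assoc] at h
    rw [hψdef]
    exact himneg _ h
  have hψbound : ∀ t, |ψ t| ≤ a := by
    intro t
    rw [hψdef, ha]
    refine le_trans (Complex.abs_im_le_norm _) ?_
    rw [norm_mul, Complex.norm_exp_ofReal_mul_I, mul_one]
  have hψnear : ∀ s t : ℝ, |t - s| ≤ 1 → ψ t ≤ ψ s + 2 * a * |t - s| := by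
    intro s t hts
    obtain ⟨es, hes⟩ : ∃ es, es = Complex.exp (((κ * s : ℝ) : ℂ) * Complex.I) := ⟨_, rfl⟩
    obtain ⟨ed, hed⟩ : ∃ ed, ed = Complex.exp (((κ * (t - s) : ℝ) : ℂ) * Complex.I) := ⟨_, rfl⟩
    have hsplit : Complex.exp (((κ * t : ℝ) : ℂ) * Complex.I) = es * ed := by
      rw [hes, hed, ← Complex.exp_add]
      congr 1
      push_cast
      ring
    have h1 : ψ t = ψ s + (A * es * (ed - 1)).im := by
      rw [hψdef]
      simp only
      rw [hsplit]
      have : A * (es * ed) = A * es + A * es * (ed - 1) := by ring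
      rw [this, Complex.add_im, hes]
    have habsAes : ‖A * es‖ = a := by
      rw [norm_mul, hes, Complex.norm_exp_ofReal_mul_I, mul_one, ha]
    have hargabs : ‖((κ * (t - s) : ℝ) : ℂ) * Complex.I‖ = |κ * (t - s)| := by
      rw [norm_mul, Complex.norm_I, mul_one, Complex.norm_real, Real.norm_eq_abs]
    have hκts : |κ * (t - s)| ≤ |t - s| := by
      rw [abs_mul]
      calc |κ| * |t - s| ≤ 1 * |t - s| := by
            apply mul_le_mul_of_nonneg_right _ (abs_nonneg _)
            rw [abs_of_pos hκ0]; linarith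
        _ = |t - s| := one_mul _
    have h2 : |(A * es * (ed - 1)).im| ≤ a * (2 * |t - s|) := by
      refine le_trans (Complex.abs_im_le_norm _) ?_
      rw [norm_mul, habsAes]
      apply mul_le_mul_of_nonneg_left _ ha0.le
      calc ‖ed - 1‖ ≤ 2 * ‖((κ * (t - s) : ℝ) : ℂ) * Complex.I‖ := by
            rw [hed]
            apply Complex.norm_exp_sub_one_le
            rw [hargabs]; exact le_trans hκts hts
        _ ≤ 2 * |t - s| := by rw [hargabs]; linarith [hκts]
    have h3 := (abs_le.mp h2).2
    linarith [h1.le]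
  -- choose m and η
  obtain ⟨m, hm0, hmbig⟩ : ∃ m : ℝ, 0 < m ∧ (A.im ≤ -2*m ∧ ψ Real.pi ≤ -2*m) := by
    refine ⟨min (-A.im) (-ψ Real.pi) / 2, ?_, ?_, ?_⟩
    · have : 0 < min (-A.im) (-ψ Real.pi) := lt_min (by linarith) (by linarith)
      linarith
    · have := min_le_left (-A.im) (-ψ Real.pi); linarith
    · have := min_le_right (-A.im) (-ψ Real.pi); linarith
  obtain ⟨η, hη0, hη12, hηm⟩ : ∃ η : ℝ, 0 < η ∧ η ≤ 1/2 ∧ 2 * a * η ≤ m / 2 := by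
    refine ⟨min (1/2) (m / (4 * a)), lt_min (by norm_num) (by positivity), min_le_left _ _, ?_⟩
    have h : min (1/2 : ℝ) (m / (4 * a)) ≤ m / (4 * a) := min_le_right _ _
    calc 2 * a * min (1/2 : ℝ) (m / (4 * a)) ≤ 2 * a * (m / (4 * a)) :=
          mul_le_mul_of_nonneg_left h (by positivity)
      _ = m / 2 := by field_simp; ring
  have hbad : ∀ t : ℝ, |t| ≤ η ∨ |t - Real.pi| ≤ η → ψ t ≤ -m := by
    intro t ht
    rcases ht with ht | ht
    · have h1 : ψ t ≤ ψ 0 + 2 * a * |t - 0| := by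
        apply hψnear
        rw [sub_zero]; linarith
      rw [sub_zero] at h1
      have h2 : 2 * a * |t| ≤ 2 * a * η := mul_le_mul_of_nonneg_left ht (by positivity)
      rw [hψ0] at h1
      linarith [hmbig.1]
    · have h1 : ψ t ≤ ψ Real.pi + 2 * a * |t - Real.pi| := by
        apply hψnear
        linarith
      have h2 : 2 * a * |t - Real.pi| ≤ 2 * a * η := mul_le_mul_of_nonneg_left ht (by positivity)
      linarith [hmbig.2]
  have hη2 : η ≤ Real.pi / 2 := by linarith
  have hsinη : 0 < Real.sin η := Real.sin_pos_of_pos_of_lt_pi hη0 (by linarith)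
  have hsinη1 : Real.sin η ≤ 1 := Real.sin_le_one η
  obtain ⟨R₂, hR₂⟩ : ∃ R₂ : ℝ, R₂ = (2 * a / Real.sin η) ^ (ε₀⁻¹ : ℝ) := ⟨_, rfl⟩
  have hR₂0 : 0 < R₂ := by rw [hR₂]; exact Real.rpow_pos_of_pos (by positivity) _
  have hR₂pow : R₂ ^ ε₀ = 2 * a / Real.sin η := by
    rw [hR₂]; exact Real.rpow_inv_rpow (by positivity) hε₀0.ne'
  -- choose B₀
  obtain ⟨B₀, hB1, hB2, hB3, hB4, hB5, hB6⟩ : ∃ B : ℝ,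
      (2*R₀ + 1 ≤ B) ∧ (a * (B/2) ^ (-ε₀) ≤ 1/2) ∧ (a * (a * (B/2) ^ (-ε₀)) ≤ m/2)
      ∧ (2*(a+m) * (Real.sin η) ^ (ε₀ - 1) ≤ B ^ ε₀) ∧ (R₂ + a*(1+R₂) + 1 ≤ B)
      ∧ (1 ≤ B) := by
    have t0 : Filter.Tendsto (fun x : ℝ => (x/2) ^ (-ε₀)) Filter.atTop (nhds 0) := by
      apply (tendsto_rpow_neg_atTop hε₀0).comp
      exact Filter.tendsto_id.atTop_div_const (by norm_num)
    have t1 : Filter.Tendsto (fun x : ℝ => a * (x/2) ^ (-ε₀)) Filter.atTop (nhds 0) := by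
      simpa using t0.const_mul a
    have t2 : Filter.Tendsto (fun x : ℝ => a * (a * (x/2) ^ (-ε₀))) Filter.atTop (nhds 0) := by
      simpa using t1.const_mul a
    have e2 := t1.eventually_lt_const (by norm_num : (0:ℝ) < 1/2)
    have e3 := t2.eventually_lt_const (by positivity : (0:ℝ) < m/2)
    have e4 := (tendsto_rpow_atTop hε₀0).eventually_ge_atTop
      (2*(a+m) * (Real.sin η) ^ (ε₀ - 1))
    have e1 := Filter.eventually_ge_atTop (2*R₀ + 1)
    have e5 := Filter.eventually_ge_atTop (R₂ + a*(1+R₂) + 1)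
    have e6 := Filter.eventually_ge_atTop (1:ℝ)
    obtain ⟨B, h⟩ := (e1.and (e2.and (e3.and (e4.and (e5.and e6))))).exists
    exact ⟨B, h.1, h.2.1.le, h.2.2.1.le, h.2.2.2.1, h.2.2.2.2.1, h.2.2.2.2.2⟩
  have hB₀0 : 0 < B₀ := by linarith
  obtain ⟨F, hF⟩ : ∃ F : ℂ → ℂ, F = fun w => A * powS w κ := ⟨_, rfl⟩
  obtain ⟨κ₀, hκ₀⟩ : ∃ κ₀ : ℝ, κ₀ = a * (B₀/2) ^ (-ε₀) := ⟨_, rfl⟩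
  rw [← hκ₀] at hB2 hB3
  have hκ₀0 : 0 < κ₀ := by rw [hκ₀]; positivity
  have hHim : ∀ z : ℂ, B₀/2 ≤ z.im → 0 < z.im := fun z hz => lt_of_lt_of_le (by linarith) hz
  have hHne : ∀ z : ℂ, B₀/2 ≤ z.im → z ≠ 0 := by
    intro z hz h0
    have := hHim z hz
    rw [h0] at this
    simp at this
  have habs_ge : ∀ z : ℂ, B₀/2 ≤ z.im → B₀/2 ≤ ‖z‖ := by
    intro z hz
    exact le_trans hz (le_trans (le_abs_self _) (Complex.abs_im_le_norm z))
  have hHslit : ∀ z : ℂ, B₀/2 ≤ z.im → -Complex.I * z ∈ Complex.slitPlane := by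
    intro z hz
    rw [Complex.mem_slitPlane_iff]
    left
    have h : (-Complex.I * z).re = z.im := by simp [Complex.mul_re]
    rw [h]
    exact hHim z hz
  have hdbound : ∀ z : ℂ, B₀/2 ≤ z.im → ‖A * ((κ:ℂ) / z * powS z κ)‖ ≤ κ₀ := by
    intro z hz
    have hz0 := hHne z hz
    have habsz : 0 < ‖z‖ := norm_pos_iff.mpr hz0
    have h1 : ‖A * ((κ:ℂ) / z * powS z κ)‖
        = a * (κ / ‖z‖ * ‖z‖ ^ κ) := by
      rw [norm_mul, norm_mul, norm_div, abs_powS z hz0 κ,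
        Complex.norm_real, Real.norm_eq_abs, _root_.abs_of_pos hκ0, ha]
    rw [h1]
    have h3 : ‖z‖ ^ κ / ‖z‖ = ‖z‖ ^ (-ε₀) := by
      rw [show (-ε₀ : ℝ) = κ - 1 by rw [hκ]; ring, Real.rpow_sub habsz κ 1, Real.rpow_one]
    have h2 : κ / ‖z‖ * ‖z‖ ^ κ ≤ ‖z‖ ^ (-ε₀) := by
      have h4 : κ / ‖z‖ * ‖z‖ ^ κ
          = κ * (‖z‖ ^ κ / ‖z‖) := by ring
      rw [h4, h3]
      have h5 : 0 ≤ ‖z‖ ^ (-ε₀) := Real.rpow_nonneg habsz.le _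
      calc κ * ‖z‖ ^ (-ε₀) ≤ 1 * ‖z‖ ^ (-ε₀) :=
            mul_le_mul_of_nonneg_right hκ1.le h5
        _ = _ := one_mul _
    have h6 : ‖z‖ ^ (-ε₀) ≤ (B₀/2) ^ (-ε₀) :=
      Real.rpow_le_rpow_of_nonpos (by linarith) (habs_ge z hz) (by linarith)
    rw [hκ₀]
    calc a * (κ / ‖z‖ * ‖z‖ ^ κ) ≤ a * ‖z‖ ^ (-ε₀) :=
          mul_le_mul_of_nonneg_left h2 ha0.le
      _ ≤ a * (B₀/2) ^ (-ε₀) := mul_le_mul_of_nonneg_left h6 ha0.le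
  have hFlip : ∀ x : ℂ, B₀/2 ≤ x.im → ∀ y : ℂ, B₀/2 ≤ y.im →
      ‖F x - F y‖ ≤ κ₀ * ‖x - y‖ := by
    intro x hx y hy
    rw [hF]
    exact (convex_halfSpace_im_ge (B₀/2)).norm_image_sub_le_of_norm_hasDerivWithin_le
      (fun z hz => (((hasDerivAt_powS κ (hHslit z hz)).const_mul A)).hasDerivWithinAt)
      hdbound hy hx
  -- imaginary part decomposition
  have him_g : ∀ w : ℂ, w ≠ 0 →
      (g w).im = w.im + ‖w‖ ^ κ * ψ ((-Complex.I * w).arg + Real.pi / 2) := by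
    intro w hw0
    rw [hg w, Complex.add_im, im_mul_powS A w hw0 κ, hψdef]
  have him_w : ∀ w : ℂ, w.im = ‖w‖ * Real.sin ((-Complex.I * w).arg + Real.pi / 2) := by
    intro w
    conv_lhs => rw [eq_abs_mul_exp w]
    rw [im_ofReal_mul_exp]
  have key : ∀ w : ℂ, w ∈ sectorX R₀ δ₀ → B₀ ≤ (g w).im → B₀/2 ≤ w.im := by
    rintro w ⟨hw1, hw2⟩ hgw
    have hw0 : w ≠ 0 := by
      intro h0
      rw [h0] at hw1
      simp at hw1
      linarith
    obtain ⟨r, hr⟩ : ∃ r : ℝ, r = ‖w‖ := ⟨_, rfl⟩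
    have hr0 : 0 < r := by rw [hr]; exact norm_pos_iff.mpr hw0
    have hw1' : R₀ < r := by rw [hr]; exact hw1
    obtain ⟨α, hα⟩ : ∃ α : ℝ, α = (-Complex.I * w).arg + Real.pi / 2 := ⟨_, rfl⟩
    have harg := abs_lt.mp hw2
    have hα1 : -δ₀ < α := by rw [hα]; linarith [harg.1]
    have hα2 : α < Real.pi + δ₀ := by rw [hα]; linarith [harg.2]
    have hgw_eq : (g w).im = w.im + r ^ κ * ψ α := by
      rw [hr, hα]; exact him_g w hw0
    have hwim : w.im = r * Real.sin α := by rw [hr, hα]; exact him_w w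
    have hrκ : 0 ≤ r ^ κ := Real.rpow_nonneg hr0.le _
    have hψa : ψ α ≤ a := le_of_abs_le (hψbound α)
    have hrκle : r ≤ R₂ → r ^ κ ≤ 1 + R₂ := by
      intro hrR
      rcases le_or_gt r 1 with h' | h'
      · have := Real.rpow_le_one hr0.le h' hκ0.le
        linarith
      · have h1 : r ^ κ ≤ r ^ (1:ℝ) := Real.rpow_le_rpow_of_exponent_le h'.le (by linarith)
        rw [Real.rpow_one] at h1
        linarith
    have hshare : R₂ < r → a * r ^ κ ≤ Real.sin η / 2 * r := by
      intro hrR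
      have hrε : R₂ ^ ε₀ ≤ r ^ ε₀ := Real.rpow_le_rpow hR₂0.le hrR.le hε₀0.le
      rw [hR₂pow, div_le_iff₀ hsinη] at hrε
      have hrεpos : 0 < r ^ ε₀ := Real.rpow_pos_of_pos hr0 _
      have hrκ_eq : r ^ κ = r / r ^ ε₀ := by
        rw [hκ, Real.rpow_sub hr0 1 ε₀, Real.rpow_one]
      have heq : a * r ^ κ = a * r / r ^ ε₀ := by rw [hrκ_eq]; ring
      rw [heq, div_le_iff₀ hrεpos]
      have h7 := mul_le_mul_of_nonneg_right hrε hr0.le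
      linarith [h7]
    by_cases hψα : ψ α ≤ 0
    · have h1 : r ^ κ * ψ α ≤ 0 := mul_nonpos_of_nonneg_of_nonpos hrκ hψα
      linarith [hgw_eq.le, hgw_eq.ge]
    push_neg at hψα
    have hα_nb1 : ¬ |α| ≤ η := fun h => by linarith [hbad α (Or.inl h)]
    have hα_nb2 : ¬ |α - Real.pi| ≤ η := fun h => by linarith [hbad α (Or.inr h)]
    rw [not_le, lt_abs] at hα_nb1 hα_nb2
    have hη14 : η < Real.pi / 2 := by linarith
    have hcases : (α < -η) ∨ (Real.pi + η < α) ∨ (η < α ∧ α < Real.pi - η) := by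
      rcases hα_nb1 with h1 | h1
      · rcases hα_nb2 with h2 | h2
        · right; left; linarith
        · right; right; exact ⟨h1, by linarith⟩
      · left; linarith
    rcases hcases with hc | hc | ⟨hc1, hc2⟩
    · exfalso
      have hsin : Real.sin α ≤ -Real.sin η := by
        have h1 : Real.sin α ≤ Real.sin (-η) :=
          Real.strictMonoOn_sin.monotoneOn ⟨by linarith, by linarith⟩
            ⟨by linarith, by linarith⟩ hc.le
        rwa [Real.sin_neg] at h1
      rcases le_or_gt r R₂ with hrR | hrR
      · have h1 := hrκle hrR
        have h2 : r ^ κ * ψ α ≤ (1 + R₂) * a :=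
          mul_le_mul h1 hψa hψα.le (by linarith)
        have h3 : w.im ≤ 0 := by
          rw [hwim]
          exact mul_nonpos_of_nonneg_of_nonpos hr0.le (by linarith)
        linarith
      · have h1 := hshare hrR
        have h2 : r ^ κ * ψ α ≤ a * r ^ κ := by
          have := mul_le_mul_of_nonneg_left hψa hrκ
          linarith
        have h3 : w.im ≤ -Real.sin η * r := by
          rw [hwim]
          have := mul_le_mul_of_nonneg_left hsin hr0.le
          linarith
        linarith [mul_pos hsinη hr0]
    · exfalso
      have hsin : Real.sin α ≤ -Real.sin η := by
        have h0 : Real.sin (α - Real.pi) = -Real.sin α := Real.sin_sub_pi α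
        have h1 : Real.sin η ≤ Real.sin (α - Real.pi) :=
          Real.strictMonoOn_sin.monotoneOn ⟨by linarith, by linarith⟩
            ⟨by linarith, by linarith⟩ (by linarith)
        rw [h0] at h1
        linarith
      rcases le_or_gt r R₂ with hrR | hrR
      · have h1 := hrκle hrR
        have h2 : r ^ κ * ψ α ≤ (1 + R₂) * a :=
          mul_le_mul h1 hψa hψα.le (by linarith)
        have h3 : w.im ≤ 0 := by
          rw [hwim]
          exact mul_nonpos_of_nonneg_of_nonpos hr0.le (by linarith)
        linarith
      · have h1 := hshare hrR
        have h2 : r ^ κ * ψ α ≤ a * r ^ κ := by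
          have := mul_le_mul_of_nonneg_left hψa hrκ
          linarith
        have h3 : w.im ≤ -Real.sin η * r := by
          rw [hwim]
          have := mul_le_mul_of_nonneg_left hsin hr0.le
          linarith
        linarith [mul_pos hsinη hr0]
    · have hsin : Real.sin η ≤ Real.sin α := sin_ge_of_mem hη0 hη2 hc1.le hc2.le
      rcases le_or_gt r R₂ with hrR | hrR
      · exfalso
        have h1 := hrκle hrR
        have hsin1 : Real.sin α ≤ 1 := Real.sin_le_one α
        have h2 : r ^ κ * ψ α ≤ (1 + R₂) * a :=
          mul_le_mul h1 hψa hψα.le (by linarith)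
        have h3 : w.im ≤ r := by
          rw [hwim]
          have := mul_le_mul_of_nonneg_left hsin1 hr0.le
          linarith
        linarith
      · have h1 := hshare hrR
        have h2 : r ^ κ * ψ α ≤ a * r ^ κ := by
          have := mul_le_mul_of_nonneg_left hψa hrκ
          linarith
        have h5 : r * Real.sin η ≤ w.im := by
          rw [hwim]
          exact mul_le_mul_of_nonneg_left hsin hr0.le
        linarith
  have hFw : ∀ w, F w = A * powS w κ := fun w => by rw [hF]
  have hgfun : g = fun z => z + A * powS z κ := funext hg
  refine ⟨B₀, by linarith, ?_, ?_, ?_, ?_⟩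
  · -- differentiability
    rw [hgfun]
    intro w hw
    obtain ⟨hw1, hw2⟩ := hw
    have hw0 : w ≠ 0 := by
      intro h0
      rw [h0] at hw1
      simp at hw1
      linarith
    have hslit : -Complex.I * w ∈ Complex.slitPlane := by
      rw [Complex.mem_slitPlane_iff_arg]
      refine ⟨?_, ?_⟩
      · intro hp
        rw [hp, abs_of_pos hπ] at hw2
        linarith
      · intro h0
        apply hw0
        have : w = Complex.I * (-Complex.I * w) := by ring_nf; simp [Complex.I_sq]
        rw [this, h0, mul_zero]
    exact (differentiableAt_id.add
      ((hasDerivAt_powS κ hslit).differentiableAt.const_mul A)).differentiableWithinAt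
  · -- maps to
    rintro w ⟨hw1, hw2⟩
    exact hw2
  · -- injective
    rintro w₁ ⟨hw₁s, hw₁b⟩ w₂ ⟨hw₂s, hw₂b⟩ heq
    have h1 : B₀/2 ≤ w₁.im := key w₁ hw₁s hw₁b
    have h2 : B₀/2 ≤ w₂.im := key w₂ hw₂s hw₂b
    have h3 : w₁ - w₂ = F w₂ - F w₁ := by
      have e1 := hg w₁
      have e2 := hg w₂
      rw [e1, e2] at heq
      rw [hFw w₁, hFw w₂]
      linear_combination heq
    have h4 : ‖w₁ - w₂‖ ≤ κ₀ * ‖w₂ - w₁‖ := by rw [h3]; exact hFlip w₂ h2 w₁ h1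
    rw [norm_sub_rev w₂ w₁] at h4
    have h5 := mul_le_mul_of_nonneg_right hB2 (norm_nonneg (w₁ - w₂))
    have h6 : ‖w₁ - w₂‖ ≤ 0 := by linarith
    have h7 : w₁ - w₂ = 0 := norm_eq_zero.mp (le_antisymm h6 (norm_nonneg _))
    exact sub_eq_zero.mp h7
  · -- surjective
    intro ζ hζ
    simp only [Set.mem_setOf_eq] at hζ
    have hζim : 0 < ζ.im := by linarith
    have hζH : B₀/2 ≤ ζ.im := by linarith
    have hζ0 : ζ ≠ 0 := hHne ζ hζH
    have habsζ : 0 < ‖ζ‖ := norm_pos_iff.mpr hζ0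
    obtain ⟨β, hβ⟩ : ∃ β : ℝ, β = (-Complex.I * ζ).arg + Real.pi/2 := ⟨_, rfl⟩
    have hargζ : |(-Complex.I * ζ).arg| < Real.pi/2 := by
      rw [Complex.abs_arg_lt_pi_div_two_iff]
      left
      simpa [Complex.mul_re] using hζim
    have habsβ := abs_lt.mp hargζ
    have hβ1 : 0 < β := by rw [hβ]; linarith [habsβ.1]
    have hβ2 : β < Real.pi := by rw [hβ]; linarith [habsβ.2]
    obtain ⟨q, hq⟩ : ∃ q : ℝ, q = ‖ζ‖ ^ κ := ⟨_, rfl⟩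
    have hq0 : 0 < q := by rw [hq]; exact Real.rpow_pos_of_pos habsζ _
    have hFζim : (F ζ).im = q * ψ β := by
      rw [hFw ζ, im_mul_powS A ζ hζ0 κ, hψdef, hq, hβ]
    have hFζabs : ‖F ζ‖ = a * q := by
      rw [hFw ζ, norm_mul, abs_powS ζ hζ0 κ, hq, ha]
    have hζim_eq : ζ.im = ‖ζ‖ * Real.sin β := by rw [hβ]; exact him_w ζ
    have hψβa : ψ β ≤ a := le_of_abs_le (hψbound β)
    have hw₀low : ζ.im/2 + m * q ≤ ζ.im - q * ψ β := by
      by_cases hcase : ψ β ≤ -m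
      · have := mul_le_mul_of_nonneg_left hcase hq0.le
        linarith
      · push_neg at hcase
        have hβmid1 : η < β := by
          by_contra hle
          push_neg at hle
          have habsum : |β| ≤ η := by rw [abs_of_pos hβ1]; exact hle
          linarith [hbad β (Or.inl habsum)]
        have hβmid2 : β < Real.pi - η := by
          by_contra hle
          push_neg at hle
          have habsum : |β - Real.pi| ≤ η := by
            rw [abs_of_nonpos (by linarith)]; linarith
          linarith [hbad β (Or.inr habsum)]
        have hsinβ : Real.sin η ≤ Real.sin β := sin_ge_of_mem hη0 hη2 hβmid1.le hβmid2.le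
        have habsle : ‖ζ‖ ≤ ζ.im / Real.sin η := by
          rw [le_div_iff₀ hsinη, hζim_eq]
          exact mul_le_mul_of_nonneg_left hsinβ habsζ.le
        have hkey2 : (a + m) * q ≤ ζ.im / 2 := by
          have h1 : q ≤ (ζ.im / Real.sin η) ^ κ := by
            rw [hq]; exact Real.rpow_le_rpow habsζ.le habsle hκ0.le
          have h2 : (ζ.im / Real.sin η) ^ κ = ζ.im ^ κ * Real.sin η ^ (ε₀ - 1) := by
            rw [Real.div_rpow hζim.le hsinη.le, div_eq_mul_inv,
              ← Real.rpow_neg hsinη.le]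
            congr 1
            rw [hκ]; ring
          have h3 : ζ.im ^ κ = ζ.im / ζ.im ^ ε₀ := by
            rw [hκ, Real.rpow_sub hζim 1 ε₀, Real.rpow_one]
          have h4 : B₀ ^ ε₀ ≤ ζ.im ^ ε₀ := Real.rpow_le_rpow hB₀0.le hζ hε₀0.le
          have h5 : 0 < ζ.im ^ ε₀ := Real.rpow_pos_of_pos hζim _
          have h6 : 0 < Real.sin η ^ (ε₀ - 1) := Real.rpow_pos_of_pos hsinη _
          calc (a + m) * q ≤ (a + m) * (ζ.im ^ κ * Real.sin η ^ (ε₀ - 1)) := by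
                apply mul_le_mul_of_nonneg_left _ (by positivity)
                rw [← h2]; exact h1
            _ = ((a + m) * Real.sin η ^ (ε₀ - 1)) * (ζ.im / ζ.im ^ ε₀) := by
                rw [h3]; ring
            _ ≤ (ζ.im ^ ε₀ / 2) * (ζ.im / ζ.im ^ ε₀) := by
                apply mul_le_mul_of_nonneg_right _ (by positivity)
                linarith
            _ = ζ.im / 2 := by field_simp
        have h7 : q * ψ β ≤ a * q := by
          have := mul_le_mul_of_nonneg_left hψβa hq0.le
          linarith
        linarith
    obtain ⟨w₀, hw₀⟩ : ∃ w₀ : ℂ, w₀ = ζ - F ζ := ⟨_, rfl⟩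
    have hw₀im : w₀.im = ζ.im - q * ψ β := by rw [hw₀, Complex.sub_im, hFζim]
    obtain ⟨ρ, hρ⟩ : ∃ ρ : ℝ, ρ = m * q := ⟨_, rfl⟩
    have hρ0 : 0 < ρ := by rw [hρ]; positivity
    have hDH : ∀ w ∈ Metric.closedBall w₀ ρ, ζ.im/2 ≤ w.im := by
      intro w hwD
      rw [Metric.mem_closedBall, Complex.dist_eq] at hwD
      have him2 : |(w - w₀).im| ≤ ρ := le_trans (Complex.abs_im_le_norm _) hwD
      have h8 := (abs_le.mp him2).1
      rw [Complex.sub_im] at h8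
      rw [hρ] at h8
      linarith [hw₀im.le, hw₀im.ge, hw₀low]
    have hDH2 : ∀ w ∈ Metric.closedBall w₀ ρ, B₀/2 ≤ w.im := by
      intro w hw
      linarith [hDH w hw]
    have hw₀H : B₀/2 ≤ w₀.im := hDH2 w₀ (Metric.mem_closedBall_self hρ0.le)
    obtain ⟨Φ, hΦ⟩ : ∃ Φ : ℂ → ℂ, Φ = fun w => ζ - F w := ⟨_, rfl⟩
    have hΦw : ∀ w, Φ w = ζ - F w := fun w => by rw [hΦ]
    have hmaps : Set.MapsTo Φ (Metric.closedBall w₀ ρ) (Metric.closedBall w₀ ρ) := by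
      intro w hwD
      rw [Metric.mem_closedBall, Complex.dist_eq]
      have h1 : Φ w - w₀ = F ζ - F w := by rw [hΦw w, hw₀]; ring
      have h2 : ‖F ζ - F w‖ ≤ κ₀ * ‖ζ - w‖ := hFlip ζ hζH w (hDH2 w hwD)
      have h3 : ‖ζ - w‖ ≤ a * q + ρ := by
        have hsp : ζ - w = F ζ + (w₀ - w) := by rw [hw₀]; ring
        rw [hsp]
        refine le_trans (norm_add_le _ _) ?_
        have e1 : ‖F ζ‖ = a * q := by rw [hFζabs]
        have e2 : ‖w₀ - w‖ ≤ ρ := by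
          rw [Metric.mem_closedBall, dist_comm] at hwD
          rw [← dist_eq_norm]
          exact hwD
        linarith
      calc ‖Φ w - w₀‖ = ‖F ζ - F w‖ := by rw [h1]
        _ ≤ κ₀ * ‖ζ - w‖ := h2
        _ ≤ κ₀ * (a * q + ρ) := mul_le_mul_of_nonneg_left h3 hκ₀0.le
        _ = (a * κ₀) * q + κ₀ * ρ := by ring
        _ ≤ (m/2) * q + (1/2) * ρ := by
            have t1 := mul_le_mul_of_nonneg_right hB3 hq0.le
            have t2 := mul_le_mul_of_nonneg_right hB2 hρ0.le
            linarith
        _ ≤ ρ := by rw [hρ]; linarith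
    have hcontr : ∀ x ∈ Metric.closedBall w₀ ρ, ∀ y ∈ Metric.closedBall w₀ ρ,
        dist (Φ x) (Φ y) ≤ (1/2 : ℝ) * dist x y := by
      intro x hx y hy
      have h1 : Φ x - Φ y = F y - F x := by rw [hΦw x, hΦw y]; ring
      rw [dist_eq_norm, h1, dist_eq_norm]
      have h2 : ‖F y - F x‖ ≤ κ₀ * ‖y - x‖ := hFlip y (hDH2 y hy) x (hDH2 x hx)
      rw [norm_sub_rev y x] at h2
      have h4 := mul_le_mul_of_nonneg_right hB2 (norm_nonneg (x - y))
      linarith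
    obtain ⟨x, hxD, hxfix⟩ := exists_fixedPoint_closedBall hρ0.le Φ hmaps hcontr
    have hΦx : ζ - F x = x := by
      conv_rhs => rw [← hxfix]
      rw [hΦw x]
    have hgx : g x = ζ := by
      rw [hg x, ← hFw x]
      linear_combination -hΦx
    have hxH : B₀/2 ≤ x.im := hDH2 x hxD
    refine ⟨x, ⟨⟨?_, ?_⟩, ?_⟩, hgx⟩
    · have h9 : x.im ≤ ‖x‖ := le_trans (le_abs_self _) (Complex.abs_im_le_norm x)
      linarith
    · have hx0 : 0 < x.im := by linarith
      have h10 : |(-Complex.I * x).arg| < Real.pi/2 := by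
        rw [Complex.abs_arg_lt_pi_div_two_iff]
        left
        simpa [Complex.mul_re] using hx0
      linarith
    · rw [hgx]; exact hζ
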